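/- Let −1 < t < 0 and let ν be a Borel probability measure on P with dim_F ν > −t. Then for every 0 < ζ < min{1, dim_F ν + t}, the Riesz potential I_{t,ν}(x) := ∫ d_P(x,y)^t dν(y) is finite for every x ∈ P and defines a ζ-Hölder continuous function on P. -/

import Mathlib

open MeasureTheory Filter Topology
open scoped ENNReal

noncomputable section

abbrev SL2 : Type := Matrix.SpecialLinearGroup (Fin 2) ℝ
abbrev V2 : Type := EuclideanSpace ℝ (Fin 2)
abbrev P1 : Type := Projectivization ℝ V2

instance : TopologicalSpace SL2 :=
  inferInstanceAs (TopologicalSpace {A : Matrix (Fin 2) (Fin 2) ℝ // A.det = 1})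
instance : MeasurableSpace SL2 := borel SL2
instance : BorelSpace SL2 := ⟨rfl⟩
instance : TopologicalSpace P1 :=
  inferInstanceAs (TopologicalSpace (Quotient (projectivizationSetoid ℝ V2)))
instance : MeasurableSpace P1 := borel P1
instance : BorelSpace P1 := ⟨rfl⟩

def gnorm (g : SL2) : ℝ := ‖Matrix.toEuclideanCLM (𝕜 := ℝ) (g : Matrix (Fin 2) (Fin 2) ℝ)‖

def gvec (g : SL2) (u : V2) : V2 :=
  Matrix.toEuclideanCLM (𝕜 := ℝ) (g : Matrix (Fin 2) (Fin 2) ℝ) u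

lemma gvec_mul (g h : SL2) (u : V2) : gvec g (gvec h u) = gvec (g * h) u := by
  simp [gvec, Matrix.SpecialLinearGroup.coe_mul, map_mul, ContinuousLinearMap.mul_apply]

lemma gvec_one (u : V2) : gvec 1 u = u := by
  simp [gvec]

lemma gvec_ne_zero (g : SL2) {u : V2} (hu : u ≠ 0) : gvec g u ≠ 0 := by
  intro h
  apply hu
  have h2 := congrArg (gvec g⁻¹) h
  rw [gvec_mul, inv_mul_cancel, gvec_one] at h2
  rw [h2]
  simp [gvec]

def pact (g : SL2) (x : P1) : P1 :=
  Projectivization.mk ℝ (gvec g x.rep) (gvec_ne_zero g x.rep_nonzero)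

def dP (x y : P1) : ℝ :=
  |x.rep 0 * y.rep 1 - x.rep 1 * y.rep 0| / (‖x.rep‖ * ‖y.rep‖)

def gxnorm (g : SL2) (x : P1) : ℝ := ‖gvec g x.rep‖ / ‖x.rep‖

def pInner (x y : P1) : ℝ := |(inner ℝ x.rep y.rep : ℝ)| / (‖x.rep‖ * ‖y.rep‖)

/-- The (topological) support of a measure. -/
def msupp (μ : Measure SL2) : Set SL2 :=
  {g | ∀ U : Set SL2, IsOpen U → g ∈ U → 0 < μ U}

def IsCompactlySupported (μ : Measure SL2) : Prop :=
  ∃ K : Set SL2, IsCompact K ∧ μ Kᶜ = 0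

/-- The closed semigroup generated by the support of `μ`. -/
def Smu (μ : Measure SL2) : Set SL2 :=
  closure ((Subsemigroup.closure (msupp μ) : Subsemigroup SL2) : Set SL2)

def StronglyIrreducible (μ : Measure SL2) : Prop :=
  ¬ ∃ F : Finset P1, F.Nonempty ∧ ∀ g ∈ Smu μ, ∀ x ∈ F, pact g x ∈ F

def Proximal (μ : Measure SL2) : Prop :=
  ∃ g ∈ Smu μ, 2 < |Matrix.trace (g : Matrix (Fin 2) (Fin 2) ℝ)|

def SIP (μ : Measure SL2) : Prop := StronglyIrreducible μ ∧ Proximal μ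

/-- `convPow μ n` is the `n`-th convolution power `μⁿ`. -/
def convPow (μ : Measure SL2) : ℕ → Measure SL2
  | 0 => Measure.dirac 1
  | n + 1 => Measure.map (fun p : SL2 × SL2 => p.1 * p.2) ((convPow μ n).prod μ)

def IsOmegaMinus (ω : SL2 → P1) : Prop :=
  ∀ g : SL2, 1 < gnorm g → gxnorm g (ω g) = (gnorm g)⁻¹

def IsUpsilonPlus (υ : SL2 → P1) : Prop :=
  ∀ g : SL2, 1 < gnorm g⁻¹ → gxnorm g⁻¹ (υ g) = (gnorm g⁻¹)⁻¹

def Eball (α ε : ℝ) (n : ℕ) : Set SL2 :=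
  {g | |(n : ℝ)⁻¹ * Real.log (gnorm g) - α| ≤ ε}

def Egam (ω : SL2 → P1) (γ α ε : ℝ) (n : ℕ) (x : P1) : Set SL2 :=
  {g | g ∈ Eball α ε n ∧ dP x (ω g) ≤ Real.exp (-(n : ℝ) * (γ - ε) * α)}

def EgamStar (υ : SL2 → P1) (α ε : ℝ) (n : ℕ) (x : P1) : Set SL2 :=
  {g | g ∈ Eball α ε n ∧ dP x (υ g) ≤ Real.exp (-(n : ℝ) * (2 - ε) * α)}

def Etilde (ω : SL2 → P1) (γ α ε : ℝ) (n : ℕ) (x : P1) : Set SL2 :=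
  if γ < 2 then
    {g | g ∈ Eball α ε n ∧ Real.exp (-(n : ℝ) * (γ + ε) * α) ≤ dP x (ω g) ∧
      dP x (ω g) ≤ Real.exp (-(n : ℝ) * (γ - ε) * α)}
  else Egam ω 2 α ε n x

def IfinN (μ : Measure SL2) (ω : SL2 → P1) (γ α ε : ℝ) (n : ℕ) : EReal :=
  (((n : ℝ)⁻¹ : ℝ) : EReal) * ENNReal.log (⨆ x : P1, convPow μ n (Egam ω γ α ε n x))

def Ieps (μ : Measure SL2) (ω : SL2 → P1) (γ α ε : ℝ) : EReal :=
  Filter.atTop.limsup (fun n => IfinN μ ω γ α ε n)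

def Ifinal (μ : Measure SL2) (ω : SL2 → P1) (γ α : ℝ) : EReal :=
  ⨅ (ε : ℝ) (_ : 0 < ε), Ieps μ ω γ α ε

def Aset (μ : Measure SL2) (ω : SL2 → P1) : Set ℝ :=
  {α : ℝ | Ifinal μ ω 0 α ≠ ⊥}

def I2starEps (μ : Measure SL2) (υ : SL2 → P1) (α ε : ℝ) : EReal :=
  Filter.atTop.limsup (fun n : ℕ =>
    (((n : ℝ)⁻¹ : ℝ) : EReal) * ENNReal.log (⨆ x : P1, convPow μ n (EgamStar υ α ε n x)))

def I2star (μ : Measure SL2) (υ : SL2 → P1) (α : ℝ) : EReal :=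
  ⨅ (ε : ℝ) (_ : 0 < ε), I2starEps μ υ α ε

def kSeq (μ : Measure SL2) (t : ℝ) (n : ℕ) : ℝ :=
  (n : ℝ)⁻¹ * Real.log (∫ g, gnorm g ^ t ∂ convPow μ n)

/-- `k : ℝ → ℝ` is the limit defining `k(t)`. -/
def KTendsto (μ : Measure SL2) (k : ℝ → ℝ) : Prop :=
  ∀ t : ℝ, Filter.Tendsto (fun n => kSeq μ t n) Filter.atTop (nhds (k t))

def kplusSeq (μ : Measure SL2) (t : ℝ) (n : ℕ) : ℝ :=
  (n : ℝ)⁻¹ * Real.log (⨆ x : P1, ∫ g, gxnorm g x ^ t ∂ convPow μ n)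

def kplus (μ : Measure SL2) (t : ℝ) : ℝ :=
  Filter.atTop.limsup (fun n => kplusSeq μ t n)

def sup2 (μ : Measure SL2) (ω : SL2 → P1) (t : ℝ) : EReal :=
  ⨆ α ∈ Aset μ ω, (Ifinal μ ω 2 α + ((-(t * α) : ℝ) : EReal))

def tc (μ : Measure SL2) (ω : SL2 → P1) (k : ℝ → ℝ) : ℝ :=
  sInf {t : ℝ | sup2 μ ω t < ((k t : ℝ) : EReal)}

def zetat (μ : Measure SL2) (ω : SL2 → P1) (k : ℝ → ℝ) (t : ℝ) : ℝ :=
  sSup {ζ : ℝ |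
    (⨆ α ∈ Aset μ ω, (Ifinal μ ω 2 α + ((-(t * α) + 2 * ζ * α : ℝ) : EReal)))
      < ((k t : ℝ) : EReal)}

def Pt (μ : Measure SL2) (t : ℝ) (ψ : P1 → ℝ) : P1 → ℝ :=
  fun x => ∫ g, gxnorm g x ^ t * ψ (pact g x) ∂μ

def sl2transpose (g : SL2) : SL2 :=
  ⟨Matrix.transpose (g : Matrix (Fin 2) (Fin 2) ℝ), by rw [Matrix.det_transpose]; exact g.2⟩

def PtStar (μ : Measure SL2) (t : ℝ) (ψ : P1 → ℝ) : P1 → ℝ :=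
  fun w => ∫ g, gxnorm (sl2transpose g) w ^ t * ψ (pact (sl2transpose g) w) ∂μ

def BoundedFn (f : P1 → ℝ) : Prop := ∃ M : ℝ, ∀ x, |f x| ≤ M

def IsEigenMeas (μ : Measure SL2) (t : ℝ) (ν : Measure P1) (c : ℝ) : Prop :=
  ∀ f : P1 → ℝ, Measurable f → BoundedFn f →
    ∫ x, Pt μ t f x ∂ν = c * ∫ x, f x ∂ν

def IsEigenMeasStar (μ : Measure SL2) (t : ℝ) (ν : Measure P1) (c : ℝ) : Prop :=
  ∀ f : P1 → ℝ, Measurable f → BoundedFn f →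
    ∫ x, PtStar μ t f x ∂ν = c * ∫ x, f x ∂ν

def IsFurstenberg (μ : Measure SL2) (ν : Measure P1) : Prop :=
  IsProbabilityMeasure ν ∧ ∀ f : P1 → ℝ, Measurable f → BoundedFn f →
    ∫ g, (∫ x, f (pact g x) ∂ν) ∂μ = ∫ x, f x ∂ν

def HolderWithC (C ζ : ℝ) (f : P1 → ℝ) : Prop :=
  ∀ x y : P1, |f x - f y| ≤ C * dP x y ^ ζ

def HolderFn (ζ : ℝ) (f : P1 → ℝ) : Prop := ∃ C : ℝ, HolderWithC C ζ f

def hSemi (ζ : ℝ) (f : P1 → ℝ) : ℝ :=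
  sSup {c : ℝ | ∃ x y : P1, x ≠ y ∧ c = |f x - f y| / dP x y ^ ζ}

def supNorm (f : P1 → ℝ) : ℝ := ⨆ x : P1, |f x|

def hNorm (ζ : ℝ) (f : P1 → ℝ) : ℝ := hSemi ζ f + supNorm f

def frostman (ν : Measure P1) : ℝ :=
  sSup {s : ℝ | 0 ≤ s ∧ ∃ C : ℝ, 0 < C ∧
    ∀ x : P1, ∀ r : ℝ, 0 < r → (ν {y | dP x y ≤ r}).toReal ≤ C * r ^ s}

def rotSL (θ : ℝ) : SL2 :=
  ⟨!![Real.cos θ, -Real.sin θ; Real.sin θ, Real.cos θ], by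
    simp [Matrix.det_fin_two_of]
    ring_nf
    rw [← Real.sin_sq_add_cos_sq θ]
    ring⟩

def IsRotInvariant (lam : Measure P1) : Prop :=
  IsProbabilityMeasure lam ∧ ∀ θ : ℝ, Measure.map (pact (rotSL θ)) lam = lam

def riesz (t : ℝ) (ν : Measure P1) (x : P1) : ℝ≥0∞ :=
  ∫⁻ y, ENNReal.ofReal (dP x y) ^ t ∂ν

-- stage 1 lemmas
lemma s17_norm_sq (u : V2) : ‖u‖ ^ 2 = u 0 ^ 2 + u 1 ^ 2 := by
  rw [EuclideanSpace.norm_eq, Real.sq_sqrt (by positivity)]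
  simp [Fin.sum_univ_two, Real.norm_eq_abs, sq_abs]

lemma s17_inner (u v : V2) : (inner ℝ u v : ℝ) = u 0 * v 0 + u 1 * v 1 := by
  simp [PiLp.inner_apply, RCLike.inner_apply, Fin.sum_univ_two]
  ring

lemma s17_norm_pos {u : V2} (hu : u ≠ 0) : 0 < ‖u‖ := norm_pos_iff.mpr hu

lemma s17_wedge_abs_le (u v : V2) : |u 0 * v 1 - u 1 * v 0| ≤ ‖u‖ * ‖v‖ := by
  have h1 : |u 0 * v 1 - u 1 * v 0| ^ 2 ≤ (‖u‖ * ‖v‖) ^ 2 := by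
    rw [sq_abs, mul_pow, s17_norm_sq, s17_norm_sq]
    nlinarith [sq_nonneg (u 0 * v 0 + u 1 * v 1)]
  nlinarith [h1, abs_nonneg (u 0 * v 1 - u 1 * v 0), norm_nonneg u, norm_nonneg v,
    mul_nonneg (norm_nonneg u) (norm_nonneg v)]

lemma s17_dP_nonneg (x y : P1) : 0 ≤ dP x y := by
  unfold dP
  positivity

lemma s17_dP_le_one (x y : P1) : dP x y ≤ 1 := by
  unfold dP
  rw [div_le_one (mul_pos (s17_norm_pos x.rep_nonzero) (s17_norm_pos y.rep_nonzero))]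
  exact s17_wedge_abs_le _ _

lemma s17_dP_comm (x y : P1) : dP x y = dP y x := by
  unfold dP
  rw [mul_comm ‖x.rep‖, abs_sub_comm]
  ring_nf

lemma s17_dP_self (x : P1) : dP x x = 0 := by
  unfold dP
  simp [mul_comm]

lemma s17_dP_mk (x : P1) (v : V2) (hv : v ≠ 0) :
    dP x (Projectivization.mk ℝ v hv) =
      |x.rep 0 * v 1 - x.rep 1 * v 0| / (‖x.rep‖ * ‖v‖) := by
  obtain ⟨a, ha⟩ := Projectivization.exists_smul_eq_mk_rep ℝ v hv
  unfold dP
  rw [← ha]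
  have h0 : ∀ i : Fin 2, ((a • v : V2)) i = (a : ℝ) * v i := by
    intro i; simp [Units.smul_def]
  have hn : ‖(a • v : V2)‖ = |(a : ℝ)| * ‖v‖ := by
    rw [Units.smul_def, norm_smul, Real.norm_eq_abs]
  have ha0 : |(a : ℝ)| ≠ 0 := by
    simp [abs_eq_zero, a.ne_zero]
  rw [h0, h0, hn]
  rw [show x.rep 0 * ((a:ℝ) * v 1) - x.rep 1 * ((a:ℝ) * v 0)
      = (a:ℝ) * (x.rep 0 * v 1 - x.rep 1 * v 0) by ring, abs_mul]
  rw [show ‖x.rep‖ * (|(a:ℝ)| * ‖v‖) = |(a:ℝ)| * (‖x.rep‖ * ‖v‖) by ring,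
    mul_div_mul_left _ _ ha0]

lemma s17_dP_eq_zero {x y : P1} (h : dP x y = 0) : x = y := by
  have hu := x.rep_nonzero
  have hv := y.rep_nonzero
  set u := x.rep with hurep
  set v := y.rep with hvrep
  have hw : u 0 * v 1 - u 1 * v 0 = 0 := by
    have := div_eq_zero_iff.mp h
    rcases this with h1 | h1
    · exact abs_eq_zero.mp h1
    · exact absurd h1 (ne_of_gt (mul_pos (s17_norm_pos hu) (s17_norm_pos hv)))
  have hcoord : v 0 ≠ 0 ∨ v 1 ≠ 0 := by
    by_contra hc
    push_neg at hc
    apply hv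
    ext i
    fin_cases i <;> simp [hc.1, hc.2]
  rw [← Projectivization.mk_rep x, ← Projectivization.mk_rep y]
  rw [Projectivization.mk_eq_mk_iff']
  by_cases hv0 : v 0 = 0
  · have hv1 : v 1 ≠ 0 := by
      intro h1; apply hv; ext i; fin_cases i <;> simp [hv0, h1]
    have hu0 : u 0 = 0 := by
      have h2 : u 0 * v 1 = 0 := by
        rw [sub_eq_zero] at hw; rw [hw, hv0]; ring
      exact (mul_eq_zero.mp h2).resolve_right hv1
    refine ⟨u 1 / v 1, ?_⟩
    ext i
    fin_cases i
    · simp only [PiLp.smul_apply, smul_eq_mul, Fin.mk_zero, Fin.mk_one, ← hurep, ← hvrep, hv0, hu0]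
      ring
    · simp only [PiLp.smul_apply, smul_eq_mul, Fin.mk_zero, Fin.mk_one, ← hurep, ← hvrep]
      field_simp
  · refine ⟨u 0 / v 0, ?_⟩
    ext i
    fin_cases i
    · simp only [PiLp.smul_apply, smul_eq_mul, Fin.mk_zero, Fin.mk_one, ← hurep, ← hvrep]
      field_simp
    · simp only [PiLp.smul_apply, smul_eq_mul, Fin.mk_zero, Fin.mk_one, ← hurep, ← hvrep]
      field_simp
      nlinarith [hw]

lemma s17_triangle (x y z : P1) : dP x z ≤ dP x y + dP y z := by
  have hu := x.rep_nonzero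
  have hv := y.rep_nonzero
  have hz := z.rep_nonzero
  set u := x.rep
  set v := y.rep
  set w := z.rep
  have hun : 0 < ‖u‖ := s17_norm_pos hu
  have hvn : 0 < ‖v‖ := s17_norm_pos hv
  have hwn : 0 < ‖w‖ := s17_norm_pos hz
  have key : (u 0 * w 1 - u 1 * w 0) * ‖v‖ ^ 2 =
      (u 0 * v 1 - u 1 * v 0) * (inner ℝ v w : ℝ) + (inner ℝ u v : ℝ) * (v 0 * w 1 - v 1 * w 0) := by
    rw [s17_norm_sq, s17_inner, s17_inner]; ring
  have hcs1 : |(inner ℝ v w : ℝ)| ≤ ‖v‖ * ‖w‖ := abs_real_inner_le_norm v w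
  have hcs2 : |(inner ℝ u v : ℝ)| ≤ ‖u‖ * ‖v‖ := abs_real_inner_le_norm u v
  have H : |u 0 * w 1 - u 1 * w 0| * ‖v‖ ^ 2 ≤
      |u 0 * v 1 - u 1 * v 0| * (‖v‖ * ‖w‖) + (‖u‖ * ‖v‖) * |v 0 * w 1 - v 1 * w 0| := by
    have h1 : |u 0 * w 1 - u 1 * w 0| * ‖v‖ ^ 2 = |(u 0 * w 1 - u 1 * w 0) * ‖v‖ ^ 2| := by
      rw [abs_mul, abs_of_nonneg (sq_nonneg ‖v‖)]
    rw [h1, key]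
    calc |(u 0 * v 1 - u 1 * v 0) * (inner ℝ v w : ℝ) + (inner ℝ u v : ℝ) * (v 0 * w 1 - v 1 * w 0)|
        ≤ |(u 0 * v 1 - u 1 * v 0) * (inner ℝ v w : ℝ)| + |(inner ℝ u v : ℝ) * (v 0 * w 1 - v 1 * w 0)| :=
          abs_add_le _ _
      _ ≤ |u 0 * v 1 - u 1 * v 0| * (‖v‖ * ‖w‖) + (‖u‖ * ‖v‖) * |v 0 * w 1 - v 1 * w 0| := by
          rw [abs_mul, abs_mul]
          gcongr
          all_goals first | exact hcs1 | exact hcs2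
  unfold dP
  rw [div_add_div _ _ (by positivity) (by positivity), div_le_div_iff₀ (by positivity) (by positivity)]
  nlinarith [H, mul_pos hun hwn, mul_pos hun hvn, mul_pos hvn hwn,
    abs_nonneg (u 0 * v 1 - u 1 * v 0), abs_nonneg (v 0 * w 1 - v 1 * w 0),
    abs_nonneg (u 0 * w 1 - u 1 * w 0)]

lemma s17_cont (x : P1) : Continuous fun y => dP x y := by
  have h1 : Continuous fun v : {v : V2 // v ≠ 0} =>
      |x.rep 0 * v.1 1 - x.rep 1 * v.1 0| / (‖x.rep‖ * ‖v.1‖) := by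
    apply Continuous.div
    · exact ((continuous_const.mul ((EuclideanSpace.proj (1 : Fin 2)).continuous.comp
        continuous_subtype_val)).sub (continuous_const.mul
        ((EuclideanSpace.proj (0 : Fin 2)).continuous.comp continuous_subtype_val))).abs
    · exact continuous_const.mul (continuous_norm.comp continuous_subtype_val)
    · intro v
      exact ne_of_gt (mul_pos (s17_norm_pos x.rep_nonzero) (s17_norm_pos v.2))
  letI : Setoid {v : V2 // v ≠ 0} := projectivizationSetoid ℝ V2
  have hq : IsQuotientMap (Quotient.mk' : {v : V2 // v ≠ 0} → P1) :=
    isQuotientMap_quotient_mk'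
  refine hq.continuous_iff.mpr ?_
  convert h1 using 1
  funext v
  show dP x (Projectivization.mk ℝ v.1 v.2) = _
  exact s17_dP_mk x v.1 v.2

lemma s17_bern {t : ℝ} (ht2 : t < 0) (ht1 : -1 < t) {b a : ℝ} (hb : 0 < b) (hba : b ≤ a) :
    b ^ t - a ^ t ≤ (-t) * b ^ (t - 1) * (a - b) := by
  have ha : 0 < a := lt_of_lt_of_le hb hba
  have hu1 : 1 ≤ a / b := (one_le_div hb).2 hba
  have hupos : 0 < a / b := by linarith
  have key : 1 + t * (a / b - 1) ≤ (a / b) ^ t := by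
    have hτ : (1 + (a / b - 1)) ^ (-t) ≤ 1 + (-t) * (a / b - 1) :=
      rpow_one_add_le_one_add_mul_self (by linarith) (by linarith) (by linarith)
    rw [show 1 + (a / b - 1) = a / b by ring] at hτ
    rcases le_or_gt (1 + t * (a / b - 1)) 0 with h0 | h0
    · exact le_trans h0 (Real.rpow_pos_of_pos hupos t).le
    · have hprod : (a / b) ^ t * (a / b) ^ (-t) = 1 := by
        rw [← Real.rpow_add hupos]; simp
      have hw : 0 < (a / b) ^ (-t) := Real.rpow_pos_of_pos hupos (-t)
      have h2 : (1 + t * (a / b - 1)) * (a / b) ^ (-t) ≤ 1 := by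
        calc (1 + t * (a / b - 1)) * (a / b) ^ (-t)
            ≤ (1 + t * (a / b - 1)) * (1 + (-t) * (a / b - 1)) :=
              mul_le_mul_of_nonneg_left hτ h0.le
          _ = 1 - (t * (a / b - 1)) ^ 2 := by ring
          _ ≤ 1 := by nlinarith [sq_nonneg (t * (a / b - 1))]
      calc 1 + t * (a / b - 1) = (1 + t * (a / b - 1)) * ((a / b) ^ (-t) * (a / b) ^ t) := by
            rw [show (a / b) ^ (-t) * (a / b) ^ t = 1 by rw [mul_comm]; exact hprod, mul_one]
        _ = ((1 + t * (a / b - 1)) * (a / b) ^ (-t)) * (a / b) ^ t := by ring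
        _ ≤ 1 * (a / b) ^ t := mul_le_mul_of_nonneg_right h2 (Real.rpow_pos_of_pos hupos t).le
        _ = (a / b) ^ t := one_mul _
  have hbt : 0 < b ^ t := Real.rpow_pos_of_pos hb t
  have h2 : b ^ t * (1 + t * (a / b - 1)) ≤ b ^ t * (a / b) ^ t :=
    mul_le_mul_of_nonneg_left key hbt.le
  have expand : b ^ t * (a / b) ^ t = a ^ t := by
    rw [← Real.mul_rpow hb.le (by positivity)]
    rw [mul_div_cancel₀ _ hb.ne']
  have h3 : b ^ t * (a / b) = b ^ (t - 1) * a := by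
    rw [Real.rpow_sub hb, Real.rpow_one]
    field_simp
  have h5 : b ^ (t - 1) * b = b ^ t := by
    rw [Real.rpow_sub hb, Real.rpow_one]
    field_simp
  rw [expand] at h2
  nlinarith [h2, h3, h5]

lemma s17_meas_le (x : P1) (r : ℝ) : MeasurableSet {y | dP x y ≤ r} :=
  (s17_cont x).measurable measurableSet_Iic

lemma s17_meas_lt (x : P1) (r : ℝ) : MeasurableSet {y | r < dP x y} :=
  (s17_cont x).measurable measurableSet_Ioi

lemma s17_meas_singleton (x : P1) : MeasurableSet ({x} : Set P1) := by
  have : ({x} : Set P1) = (fun y => dP x y) ⁻¹' {0} := by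
    ext y
    simp only [Set.mem_singleton_iff, Set.mem_preimage]
    constructor
    · intro h; rw [h]; exact s17_dP_self x
    · intro h; exact (s17_dP_eq_zero h).symm
  rw [this]
  exact (s17_cont x).measurable (measurableSet_singleton 0)

lemma s17_meas_fun (x : P1) (p : ℝ) :
    Measurable fun y => ENNReal.ofReal (dP x y) ^ p :=
  (ENNReal.continuous_rpow_const.comp (ENNReal.continuous_ofReal.comp (s17_cont x))).measurable

lemma s17_key (ν : Measure P1) (f : P1 → ℝ≥0∞) (S : Set P1)
    (A : ℕ → Set P1) (hA : ∀ n, MeasurableSet (A n)) (c : ℕ → ℝ≥0∞)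
    {a q : ℝ} (ha : 0 ≤ a) (hq0 : 0 ≤ q) (hq1 : q < 1)
    (hbound : ∀ n, c n * ν (A n) ≤ ENNReal.ofReal (a * q ^ n))
    (hdom : ∀ y ∈ S, ∃ n, y ∈ A n ∧ f y ≤ c n) :
    ∫⁻ y in S, f y ∂ν ≤ ENNReal.ofReal (a * (1 - q)⁻¹) := by
  have hg : ∀ n, Measurable ((A n).indicator fun _ => c n) := fun n =>
    measurable_const.indicator (hA n)
  have h1 : ∀ y ∈ S, f y ≤ ∑' n, (A n).indicator (fun _ => c n) y := by
    intro y hy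
    obtain ⟨n, hyA, hfc⟩ := hdom y hy
    refine le_trans ?_ (ENNReal.le_tsum n)
    rwa [Set.indicator_of_mem hyA]
  calc ∫⁻ y in S, f y ∂ν
      ≤ ∫⁻ y in S, (∑' n, (A n).indicator (fun _ => c n) y) ∂ν :=
        setLIntegral_mono (Measurable.ennreal_tsum hg) h1
    _ ≤ ∫⁻ y, (∑' n, (A n).indicator (fun _ => c n) y) ∂ν := setLIntegral_le_lintegral _ _
    _ = ∑' n, ∫⁻ y, (A n).indicator (fun _ => c n) y ∂ν :=
        lintegral_tsum fun n => (hg n).aemeasurable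
    _ = ∑' n, c n * ν (A n) := by
        congr 1
        funext n
        rw [lintegral_indicator (hA n), setLIntegral_const]
    _ ≤ ∑' n, ENNReal.ofReal (a * q ^ n) := ENNReal.tsum_le_tsum hbound
    _ = ∑' n, ENNReal.ofReal a * ENNReal.ofReal q ^ n := by
        congr 1
        funext n
        rw [ENNReal.ofReal_mul ha, ENNReal.ofReal_pow hq0]
    _ = ENNReal.ofReal a * (1 - ENNReal.ofReal q)⁻¹ := by
        rw [ENNReal.tsum_mul_left, ENNReal.tsum_geometric]
    _ = ENNReal.ofReal (a * (1 - q)⁻¹) := by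
        rw [ENNReal.ofReal_mul ha]
        congr 1
        rw [ENNReal.ofReal_inv_of_pos (by linarith), ENNReal.ofReal_sub _ hq0,
          ENNReal.ofReal_one]

lemma s17_null {ν : Measure P1} [IsProbabilityMeasure ν] {s C : ℝ} (hs : 0 < s) (hC : 0 < C)
    (hfro : ∀ x r, 0 < r → (ν {y | dP x y ≤ r}).toReal ≤ C * r ^ s) (x : P1) :
    ν {x} = 0 := by
  have hsub : ∀ r : ℝ, 0 < r → (ν {x}).toReal ≤ C * r ^ s := by
    intro r hr
    refine le_trans (ENNReal.toReal_mono (measure_ne_top ν _) (measure_mono ?_)) (hfro x r hr)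
    rintro y rfl
    simp only [Set.mem_setOf_eq, s17_dP_self]
    exact hr.le
  have h0 : (ν {x}).toReal ≤ 0 := by
    refine le_of_forall_pos_le_add ?_
    intro ε hε
    have hb : (0:ℝ) < ε / C := by positivity
    have hr : 0 < (ε / C) ^ (1 / s) := Real.rpow_pos_of_pos hb _
    have h2 := hsub _ hr
    have hcalc : C * ((ε / C) ^ (1 / s)) ^ s = ε := by
      rw [← Real.rpow_mul hb.le, one_div, inv_mul_cancel₀ hs.ne', Real.rpow_one]
      field_simp
    rw [hcalc] at h2
    linarith
  have h1 : (ν {x}).toReal = 0 := le_antisymm h0 ENNReal.toReal_nonneg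
  exact ((ENNReal.toReal_eq_zero_iff _).mp h1).resolve_right (measure_ne_top ν _)

lemma s17_rpow_neg_nat (m : ℕ) : (2:ℝ) ^ (-(m:ℝ)) = ((2:ℝ) ^ m)⁻¹ := by
  rw [Real.rpow_neg (by norm_num), Real.rpow_natCast]

lemma s17_near {ν : Measure P1} [IsProbabilityMeasure ν] {s C p : ℝ} (hs : 0 < s) (hC : 0 < C)
    (hfro : ∀ x r, 0 < r → (ν {y | dP x y ≤ r}).toReal ≤ C * r ^ s)
    (hp : p < 0) (hsp : 0 < s + p) (x : P1) {r : ℝ} (hr : 0 < r) :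
    ∫⁻ y in {y | dP x y ≤ r}, ENNReal.ofReal (dP x y) ^ p ∂ν ≤
      ENNReal.ofReal (C * 2 ^ (-p) * r ^ (s + p) * (1 - 2 ^ (-(s + p)))⁻¹) := by
  have h2 : (0:ℝ) < 2 := two_pos
  set ρ : ℕ → ℝ := fun n => r * 2 ^ (-(n:ℝ)) with hρ
  have hρpos : ∀ n, 0 < ρ n := fun n => mul_pos hr (Real.rpow_pos_of_pos h2 _)
  set A : ℕ → Set P1 := fun n => {y | dP x y ≤ ρ n} with hA'
  set c : ℕ → ℝ≥0∞ := fun n => ENNReal.ofReal (ρ (n+1) ^ p) with hc'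
  have hxnull : ν {x} = 0 := s17_null hs hC hfro x
  have hae : ({y | dP x y ≤ r} : Set P1) =ᵐ[ν] ({y | dP x y ≤ r} \ {x} : Set P1) := by
    refine (MeasureTheory.ae_eq_set.2 ⟨?_, ?_⟩)
    · refine measure_mono_null ?_ hxnull
      intro y hy
      simp only [Set.mem_diff, not_and, not_not] at hy
      exact hy.2 hy.1
    · refine measure_mono_null ?_ hxnull
      intro y hy
      exact absurd hy.1.1 hy.2
  rw [setLIntegral_congr hae]
  have hqcalc : ∀ n : ℕ, ρ (n+1) ^ p * (C * ρ n ^ s) =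
      (C * 2 ^ (-p) * r ^ (s + p)) * ((2:ℝ) ^ (-(s+p))) ^ n := by
    intro n
    have hq2 : ((2:ℝ) ^ (-(s+p))) ^ (n:ℕ) = 2 ^ (-(s+p) * (n:ℝ)) := by
      rw [← Real.rpow_natCast ((2:ℝ) ^ (-(s+p))) n, ← Real.rpow_mul h2.le]
    simp only [hρ]
    push_cast
    rw [Real.mul_rpow hr.le (Real.rpow_nonneg h2.le _),
        Real.mul_rpow hr.le (Real.rpow_nonneg h2.le _),
        ← Real.rpow_mul h2.le, ← Real.rpow_mul h2.le, hq2,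
        Real.rpow_add hr s p]
    have hexp : (2:ℝ) ^ (-((n:ℝ) + 1) * p) * 2 ^ (-(n:ℝ) * s) =
        2 ^ (-p) * 2 ^ (-(s + p) * (n:ℝ)) := by
      rw [← Real.rpow_add h2, ← Real.rpow_add h2]
      congr 1
      ring
    calc r ^ p * 2 ^ (-((n:ℝ) + 1) * p) * (C * (r ^ s * 2 ^ (-(n:ℝ) * s)))
        = (2 ^ (-((n:ℝ)+1)*p) * 2 ^ (-(n:ℝ)*s)) * (C * r^s * r^p) := by ring
      _ = (2 ^ (-p) * 2 ^ (-(s+p)*(n:ℝ))) * (C * r^s * r^p) := by rw [hexp]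
      _ = C * 2 ^ (-p) * (r ^ s * r ^ p) * 2 ^ (-(s+p) * (n:ℝ)) := by ring
  refine le_trans (s17_key ν _ _ A (fun n => s17_meas_le x (ρ n)) c
    (a := C * 2 ^ (-p) * r ^ (s+p)) (q := 2 ^ (-(s+p))) (by positivity) (by positivity)
    (Real.rpow_lt_one_of_one_lt_of_neg one_lt_two (by linarith)) ?_ ?_) (le_of_eq rfl)
  · intro n
    have hν : ν (A n) ≤ ENNReal.ofReal (C * ρ n ^ s) := by
      calc ν (A n) = ENNReal.ofReal ((ν (A n)).toReal) :=
            (ENNReal.ofReal_toReal (measure_ne_top _ _)).symm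
        _ ≤ _ := ENNReal.ofReal_le_ofReal (hfro x (ρ n) (hρpos n))
    calc c n * ν (A n) ≤ ENNReal.ofReal (ρ (n+1) ^ p) * ENNReal.ofReal (C * ρ n ^ s) :=
          mul_le_mul_right hν _
      _ = ENNReal.ofReal (ρ (n+1) ^ p * (C * ρ n ^ s)) :=
          (ENNReal.ofReal_mul (by positivity)).symm
      _ = ENNReal.ofReal ((C * 2 ^ (-p) * r ^ (s+p)) * ((2:ℝ) ^ (-(s+p))) ^ n) := by
          rw [hqcalc n]
  · intro y hy
    obtain ⟨hle, hne⟩ := hy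
    simp only [Set.mem_setOf_eq] at hle
    have hd0 : 0 < dP x y := by
      rcases lt_or_eq_of_le (s17_dP_nonneg x y) with h | h
      · exact h
      · exact absurd (Set.mem_singleton_iff.mpr (s17_dP_eq_zero h.symm).symm) hne
    have hQ : ∃ n : ℕ, ρ (n+1) < dP x y := by
      obtain ⟨m, hm⟩ := pow_unbounded_of_one_lt (r / dP x y) (one_lt_two (α := ℝ))
      refine ⟨m, ?_⟩
      have he : ρ (m+1) = r / (2:ℝ) ^ (m+1) := by
        simp only [hρ]
        push_cast
        rw [show -((m:ℝ)+1) = -(((m+1:ℕ)):ℝ) by push_cast; ring, s17_rpow_neg_nat (m+1),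
          div_eq_mul_inv]
      rw [he, div_lt_iff₀ (by positivity)]
      rw [div_lt_iff₀ hd0] at hm
      have h2m : (2:ℝ)^m ≤ 2^(m+1) := by
        apply pow_le_pow_right₀ (by norm_num) (Nat.le_succ m)
      nlinarith [hd0]
    set n₀ := Nat.find hQ with hn₀
    have hlt : ρ (n₀+1) < dP x y := Nat.find_spec hQ
    have hle' : dP x y ≤ ρ n₀ := by
      rcases Nat.eq_zero_or_pos n₀ with h0 | h0
      · rw [h0]
        have hr0 : ρ 0 = r := by simp [hρ]
        rw [hr0]; exact hle
      · have hmin := Nat.find_min hQ (show n₀ - 1 < n₀ by omega)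
        push_neg at hmin
        have heq : n₀ - 1 + 1 = n₀ := by omega
        rwa [heq] at hmin
    refine ⟨n₀, hle', ?_⟩
    rw [ENNReal.ofReal_rpow_of_pos hd0]
    exact ENNReal.ofReal_le_ofReal
      (Real.rpow_le_rpow_of_nonpos (hρpos (n₀+1)) hlt.le hp.le)

lemma s17_far {ν : Measure P1} [IsProbabilityMeasure ν] {s C p : ℝ} (hs : 0 < s) (hC : 0 < C)
    (hfro : ∀ x r, 0 < r → (ν {y | dP x y ≤ r}).toReal ≤ C * r ^ s)
    (hp : p < 0) (hsp : s + p < 0) (x : P1) {δ : ℝ} (hδ : 0 < δ) :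
    ∫⁻ y in {y | δ < dP x y}, ENNReal.ofReal (dP x y) ^ p ∂ν ≤
      ENNReal.ofReal (C * 2 ^ s * δ ^ (s + p) * (1 - 2 ^ (s + p))⁻¹) := by
  have h2 : (0:ℝ) < 2 := two_pos
  set A : ℕ → Set P1 := fun n => {y | dP x y ≤ δ * 2 ^ ((n:ℝ) + 1)} with hA'
  set c : ℕ → ℝ≥0∞ := fun n => ENNReal.ofReal ((δ * 2 ^ ((n:ℝ))) ^ p) with hc'
  have hApos : ∀ n : ℕ, (0:ℝ) < δ * 2 ^ ((n:ℝ) + 1) :=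
    fun n => mul_pos hδ (Real.rpow_pos_of_pos h2 _)
  have hcpos : ∀ n : ℕ, (0:ℝ) < δ * 2 ^ ((n:ℝ)) :=
    fun n => mul_pos hδ (Real.rpow_pos_of_pos h2 _)
  have hqcalc : ∀ n : ℕ, (δ * 2 ^ ((n:ℝ))) ^ p * (C * (δ * 2 ^ ((n:ℝ) + 1)) ^ s) =
      (C * 2 ^ s * δ ^ (s + p)) * ((2:ℝ) ^ (s + p)) ^ n := by
    intro n
    have hq2 : ((2:ℝ) ^ (s + p)) ^ (n:ℕ) = 2 ^ ((s + p) * (n:ℝ)) := by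
      rw [← Real.rpow_natCast ((2:ℝ) ^ (s + p)) n, ← Real.rpow_mul h2.le]
    rw [Real.mul_rpow hδ.le (Real.rpow_nonneg h2.le _),
        Real.mul_rpow hδ.le (Real.rpow_nonneg h2.le _),
        ← Real.rpow_mul h2.le, ← Real.rpow_mul h2.le, hq2,
        Real.rpow_add hδ s p]
    have hexp : (2:ℝ) ^ ((n:ℝ) * p) * 2 ^ (((n:ℝ) + 1) * s) =
        2 ^ s * 2 ^ ((s + p) * (n:ℝ)) := by
      rw [← Real.rpow_add h2, ← Real.rpow_add h2]
      congr 1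
      ring
    calc δ ^ p * 2 ^ ((n:ℝ) * p) * (C * (δ ^ s * 2 ^ (((n:ℝ) + 1) * s)))
        = (2 ^ ((n:ℝ) * p) * 2 ^ (((n:ℝ) + 1) * s)) * (C * δ^s * δ^p) := by ring
      _ = (2 ^ s * 2 ^ ((s+p)*(n:ℝ))) * (C * δ^s * δ^p) := by rw [hexp]
      _ = C * 2 ^ s * (δ ^ s * δ ^ p) * 2 ^ ((s+p) * (n:ℝ)) := by ring
  refine le_trans (s17_key ν _ _ A
    (fun n => s17_meas_le x (δ * 2 ^ ((n:ℝ) + 1))) c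
    (a := C * 2 ^ s * δ ^ (s+p)) (q := 2 ^ (s+p)) (by positivity) (by positivity)
    (Real.rpow_lt_one_of_one_lt_of_neg one_lt_two hsp) ?_ ?_) (le_of_eq rfl)
  · intro n
    have hν : ν (A n) ≤ ENNReal.ofReal (C * (δ * 2 ^ ((n:ℝ) + 1)) ^ s) := by
      calc ν (A n) = ENNReal.ofReal ((ν (A n)).toReal) :=
            (ENNReal.ofReal_toReal (measure_ne_top _ _)).symm
        _ ≤ _ := ENNReal.ofReal_le_ofReal (hfro x _ (hApos n))
    calc c n * ν (A n)
        ≤ ENNReal.ofReal ((δ * 2 ^ ((n:ℝ))) ^ p) *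
            ENNReal.ofReal (C * (δ * 2 ^ ((n:ℝ) + 1)) ^ s) := mul_le_mul_right hν _
      _ = ENNReal.ofReal ((δ * 2 ^ ((n:ℝ))) ^ p * (C * (δ * 2 ^ ((n:ℝ) + 1)) ^ s)) :=
          (ENNReal.ofReal_mul (by positivity)).symm
      _ = ENNReal.ofReal ((C * 2 ^ s * δ ^ (s+p)) * ((2:ℝ) ^ (s+p)) ^ n) := by rw [hqcalc n]
  · intro y hy
    simp only [Set.mem_setOf_eq] at hy
    have hd0 : 0 < dP x y := hδ.trans hy
    have hQ : ∃ n : ℕ, dP x y ≤ δ * 2 ^ ((n:ℝ) + 1) := by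
      obtain ⟨m, hm⟩ := pow_unbounded_of_one_lt (dP x y / δ) (one_lt_two (α := ℝ))
      refine ⟨m, ?_⟩
      have he : (2:ℝ) ^ ((m:ℝ) + 1) = 2 ^ (m+1 : ℕ) := by
        rw [← Real.rpow_natCast 2 (m+1)]
        push_cast
        ring_nf
      rw [he]
      rw [div_lt_iff₀ hδ] at hm
      have h2m : (2:ℝ)^m ≤ 2^(m+1) := pow_le_pow_right₀ (by norm_num) (Nat.le_succ m)
      nlinarith [hδ]
    set n₀ := Nat.find hQ with hn₀
    have hub : dP x y ≤ δ * 2 ^ ((n₀:ℝ) + 1) := Nat.find_spec hQ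
    have hlb : δ * 2 ^ ((n₀:ℝ)) < dP x y := by
      rcases Nat.eq_zero_or_pos n₀ with h0 | h0
      · rw [h0]
        simpa using hy
      · have hmin := Nat.find_min hQ (show n₀ - 1 < n₀ by omega)
        push_neg at hmin
        have heq : ((n₀ - 1 : ℕ) : ℝ) + 1 = (n₀ : ℝ) := by
          have h1 : n₀ - 1 + 1 = n₀ := by omega
          calc ((n₀-1:ℕ):ℝ) + 1 = ((n₀ - 1 + 1 : ℕ) : ℝ) := by push_cast; ring
            _ = (n₀:ℝ) := by rw [h1]
        rwa [heq] at hmin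
    refine ⟨n₀, hub, ?_⟩
    rw [ENNReal.ofReal_rpow_of_pos hd0]
    exact ENNReal.ofReal_le_ofReal
      (Real.rpow_le_rpow_of_nonpos (hcpos n₀) hlb.le hp.le)

/-- If `dim_F ν > -t` then the Riesz potential `I_{t,ν}` is finite everywhere
and `ζ`-Hölder for every `0 < ζ < min{1, dim_F ν + t}`. -/
theorem statement17 (t : ℝ) (ht1 : -1 < t) (ht2 : t < 0)
    (ν : Measure P1) (hν : IsProbabilityMeasure ν) (hdim : -t < frostman ν)
    (ζ : ℝ) (hζ1 : 0 < ζ) (hζ2 : ζ < min 1 (frostman ν + t)) :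
    (∀ x, riesz t ν x ≠ ⊤) ∧ HolderFn ζ (fun x => (riesz t ν x).toReal) := by
  have hζ2a : ζ < 1 := lt_of_lt_of_le hζ2 (min_le_left _ _)
  have hζ2b : ζ < frostman ν + t := lt_of_lt_of_le hζ2 (min_le_right _ _)
  have ht0 : 0 < -t := by linarith
  have hne : {s : ℝ | 0 ≤ s ∧ ∃ C : ℝ, 0 < C ∧ ∀ x : P1, ∀ r : ℝ, 0 < r →
      (ν {y | dP x y ≤ r}).toReal ≤ C * r ^ s}.Nonempty := by
    by_contra hcon
    rw [Set.not_nonempty_iff_eq_empty] at hcon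
    have h0 : frostman ν = 0 := by unfold frostman; rw [hcon]; exact Real.sSup_empty
    rw [h0] at hdim
    linarith
  have hlt : ζ - t < frostman ν := by linarith
  unfold frostman at hlt
  obtain ⟨s₀, hmem, hs₀gt⟩ := exists_lt_of_lt_csSup hne hlt
  obtain ⟨hs₀0, C₀, hC₀, hfro₀⟩ := hmem
  set s : ℝ := min s₀ ((ζ + 1 - 2*t)/2) with hsdef
  have hsgt : ζ - t < s := lt_min hs₀gt (by linarith)
  have hslt : s < 1 - t := lt_of_le_of_lt (min_le_right _ _) (by linarith)
  have hspos : 0 < s := by linarith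
  have hsle : s ≤ s₀ := min_le_left _ _
  set C : ℝ := max C₀ 1 with hCdef
  have hC : 0 < C := lt_of_lt_of_le one_pos (le_max_right _ _)
  have hfro : ∀ x r, 0 < r → (ν {y | dP x y ≤ r}).toReal ≤ C * r ^ s := by
    intro x r hr
    rcases le_or_gt r 1 with h1 | h1
    · have hmono : r ^ s₀ ≤ r ^ s := Real.rpow_le_rpow_of_exponent_ge hr h1 hsle
      have hCle : C₀ ≤ C := le_max_left _ _
      have hrs : 0 ≤ r ^ s := Real.rpow_nonneg hr.le s
      calc (ν {y | dP x y ≤ r}).toReal ≤ C₀ * r ^ s₀ := hfro₀ x r hr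
        _ ≤ C₀ * r ^ s := mul_le_mul_of_nonneg_left hmono hC₀.le
        _ ≤ C * r ^ s := mul_le_mul_of_nonneg_right hCle hrs
    · have hν1 : (ν {y | dP x y ≤ r}).toReal ≤ 1 := by
        have h2 : (ν {y | dP x y ≤ r}).toReal ≤ (ν Set.univ).toReal :=
          ENNReal.toReal_mono (measure_ne_top _ _) (measure_mono (Set.subset_univ _))
        simpa using h2
      have hr1 : 1 ≤ r ^ s := Real.one_le_rpow h1.le hspos.le
      have hC1 : 1 ≤ C := le_max_right _ _
      calc (ν {y | dP x y ≤ r}).toReal ≤ 1 := hν1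
        _ ≤ C * r ^ s := by nlinarith
  have hspt : ζ < s + t := by linarith
  have hspt0 : 0 < s + t := by linarith
  have hstm : s + (t-1) < 0 := by linarith
  have htm : t - 1 < 0 := by linarith
  -- finiteness
  have hfin : ∀ x, riesz t ν x ≤
      ENNReal.ofReal (C * 2 ^ (-t) * (1:ℝ) ^ (s + t) * (1 - 2 ^ (-(s + t)))⁻¹) := by
    intro x
    have huniv : ({y | dP x y ≤ 1} : Set P1) = Set.univ := by
      ext y
      simp [s17_dP_le_one x y]
    calc riesz t ν x = ∫⁻ y in {y | dP x y ≤ 1}, ENNReal.ofReal (dP x y) ^ t ∂ν := by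
          rw [huniv, Measure.restrict_univ]; rfl
      _ ≤ _ := s17_near hspos hC hfro ht2 hspt0 x one_pos
  have hfin' : ∀ x, riesz t ν x ≠ ⊤ :=
    fun x => ne_top_of_le_ne_top ENNReal.ofReal_ne_top (hfin x)
  refine ⟨hfin', ?_⟩
  -- constants
  have hq1pos : 0 < 1 - (2:ℝ) ^ (-(s + t)) := by
    have := Real.rpow_lt_one_of_one_lt_of_neg (x := 2) (z := -(s+t)) one_lt_two (by linarith)
    linarith
  have hq2pos : 0 < 1 - (2:ℝ) ^ (s + (t - 1)) := by
    have := Real.rpow_lt_one_of_one_lt_of_neg (x := 2) (z := s + (t-1)) one_lt_two hstm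
    linarith
  set K1 : ℝ := C * 2 ^ (-t) * (1 - (2:ℝ) ^ (-(s + t)))⁻¹ with hK1def
  set K2 : ℝ := C * 2 ^ s * (1 - (2:ℝ) ^ (s + (t - 1)))⁻¹ with hK2def
  have hK1pos : 0 < K1 :=
    mul_pos (mul_pos hC (Real.rpow_pos_of_pos two_pos _)) (inv_pos.2 hq1pos)
  have hK2pos : 0 < K2 :=
    mul_pos (mul_pos hC (Real.rpow_pos_of_pos two_pos _)) (inv_pos.2 hq2pos)
  set B : ℝ := K1 + (-t) * K2 with hBdef
  have hB0 : 0 < B := by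
    have : 0 < (-t) * K2 := mul_pos ht0 hK2pos
    linarith
  -- key step
  have key : ∀ x x' : P1, 0 < dP x x' →
      riesz t ν x ≤ riesz t ν x' + ENNReal.ofReal (B * dP x x' ^ ζ) := by
    intro x x' hδ0
    set δ := dP x x' with hδdef
    have hδ1 : δ ≤ 1 := s17_dP_le_one x x'
    set N : Set P1 := {y | dP x y ≤ δ} with hN
    have hNmeas := s17_meas_le x δ
    have hpt : ∀ y, ENNReal.ofReal (dP x y) ^ t ≤ ENNReal.ofReal (dP x' y) ^ t
        + N.indicator (fun y => ENNReal.ofReal (dP x y) ^ t) y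
        + Nᶜ.indicator (fun y => ENNReal.ofReal ((-t) * δ) * ENNReal.ofReal (dP x y) ^ (t-1)) y := by
      intro y
      by_cases hyN : y ∈ N
      · rw [Set.indicator_of_mem hyN, Set.indicator_of_notMem (by simp [hyN]), add_zero]
        exact le_add_self
      · rw [Set.indicator_of_notMem hyN, Set.indicator_of_mem (Set.mem_compl hyN), add_zero]
        have hd : δ < dP x y := not_le.mp hyN
        have hd0 : 0 < dP x y := hδ0.trans hd
        have htri : dP x y ≤ δ + dP x' y := s17_triangle x x' y
        have htri2 : dP x' y ≤ δ + dP x y := by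
          have h1 := s17_triangle x' x y
          rwa [s17_dP_comm x' x] at h1
        have hd'0 : 0 < dP x' y := by linarith
        have hreal : dP x y ^ t ≤ dP x' y ^ t + (-t) * δ * dP x y ^ (t-1) := by
          rcases le_or_gt (dP x' y) (dP x y) with hcase | hcase
          · have h1 : dP x y ^ t ≤ dP x' y ^ t :=
              Real.rpow_le_rpow_of_nonpos hd'0 hcase ht2.le
            have h2 : 0 ≤ (-t) * δ * dP x y ^ (t-1) := by positivity
            linarith
          · have h1 := s17_bern ht2 ht1 hd0 hcase.le
            have h2 : dP x' y - dP x y ≤ δ := by linarith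
            have h3 : 0 < dP x y ^ (t-1) := Real.rpow_pos_of_pos hd0 _
            have h4 : (-t) * dP x y ^ (t-1) * (dP x' y - dP x y) ≤ (-t) * dP x y ^ (t-1) * δ :=
              mul_le_mul_of_nonneg_left h2 (by positivity)
            nlinarith [h1, h4]
        calc ENNReal.ofReal (dP x y) ^ t = ENNReal.ofReal (dP x y ^ t) :=
              ENNReal.ofReal_rpow_of_pos hd0
          _ ≤ ENNReal.ofReal (dP x' y ^ t + (-t) * δ * dP x y ^ (t-1)) :=
              ENNReal.ofReal_le_ofReal hreal
          _ ≤ ENNReal.ofReal (dP x' y ^ t) + ENNReal.ofReal ((-t) * δ * dP x y ^ (t-1)) :=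
              ENNReal.ofReal_add_le
          _ = ENNReal.ofReal (dP x' y) ^ t
              + ENNReal.ofReal ((-t) * δ) * ENNReal.ofReal (dP x y ^ (t-1)) := by
              rw [ENNReal.ofReal_rpow_of_pos hd'0, ENNReal.ofReal_mul (show (0:ℝ) ≤ (-t) * δ by positivity)]
          _ = ENNReal.ofReal (dP x' y) ^ t
              + ENNReal.ofReal ((-t) * δ) * ENNReal.ofReal (dP x y) ^ (t-1) := by
              rw [ENNReal.ofReal_rpow_of_pos hd0]
    have hm1 : Measurable fun y => ENNReal.ofReal (dP x' y) ^ t := s17_meas_fun x' t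
    have hm2 : Measurable (N.indicator fun y => ENNReal.ofReal (dP x y) ^ t) :=
      (s17_meas_fun x t).indicator hNmeas
    have hm3 : Measurable (Nᶜ.indicator fun y =>
        ENNReal.ofReal ((-t)*δ) * ENNReal.ofReal (dP x y) ^ (t-1)) :=
      (measurable_const.mul (s17_meas_fun x (t-1))).indicator hNmeas.compl
    have hint : riesz t ν x ≤ ∫⁻ y, (ENNReal.ofReal (dP x' y) ^ t
        + N.indicator (fun y => ENNReal.ofReal (dP x y) ^ t) y
        + Nᶜ.indicator (fun y => ENNReal.ofReal ((-t) * δ)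
            * ENNReal.ofReal (dP x y) ^ (t-1)) y) ∂ν := lintegral_mono hpt
    rw [lintegral_add_right _ hm3, lintegral_add_left hm1] at hint
    have e2 : ∫⁻ y, N.indicator (fun y => ENNReal.ofReal (dP x y) ^ t) y ∂ν ≤
        ENNReal.ofReal (C * 2 ^ (-t) * δ ^ (s + t) * (1 - 2 ^ (-(s + t)))⁻¹) := by
      rw [lintegral_indicator hNmeas]
      exact s17_near hspos hC hfro ht2 hspt0 x hδ0
    have e3 : ∫⁻ y, Nᶜ.indicator (fun y => ENNReal.ofReal ((-t) * δ)
          * ENNReal.ofReal (dP x y) ^ (t-1)) y ∂ν ≤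
        ENNReal.ofReal ((-t) * δ)
          * ENNReal.ofReal (C * 2 ^ s * δ ^ (s + (t-1)) * (1 - 2 ^ (s + (t-1)))⁻¹) := by
      rw [lintegral_indicator hNmeas.compl, lintegral_const_mul _ (s17_meas_fun x (t-1))]
      refine mul_le_mul_right ?_ _
      have hcompl : (Nᶜ : Set P1) = {y | δ < dP x y} := by
        ext y
        simp [hN, not_le]
      rw [hcompl]
      exact s17_far hspos hC hfro htm hstm x hδ0
    have hcomb : ENNReal.ofReal (C * 2 ^ (-t) * δ ^ (s + t) * (1 - 2 ^ (-(s + t)))⁻¹)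
        + ENNReal.ofReal ((-t) * δ)
          * ENNReal.ofReal (C * 2 ^ s * δ ^ (s + (t-1)) * (1 - 2 ^ (s + (t-1)))⁻¹)
        ≤ ENNReal.ofReal (B * δ ^ ζ) := by
      rw [← ENNReal.ofReal_mul (by positivity), ← ENNReal.ofReal_add (by positivity) (by positivity)]
      apply ENNReal.ofReal_le_ofReal
      have hδζ : δ ^ (s + t) ≤ δ ^ ζ := Real.rpow_le_rpow_of_exponent_ge hδ0 hδ1 hspt.le
      have hδsplit : δ * δ ^ (s + (t-1)) = δ ^ (s + t) := by
        have h1 : δ ^ (1 + (s + (t-1))) = δ * δ ^ (s + (t-1)) := by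
          rw [Real.rpow_add hδ0, Real.rpow_one]
        rw [← h1]
        congr 1
        ring
      calc C * 2 ^ (-t) * δ ^ (s + t) * (1 - 2 ^ (-(s + t)))⁻¹
            + (-t) * δ * (C * 2 ^ s * δ ^ (s + (t-1)) * (1 - 2 ^ (s + (t-1)))⁻¹)
          = K1 * δ ^ (s + t) + ((-t) * K2) * (δ * δ ^ (s + (t-1))) := by
            rw [hK1def, hK2def]; ring
        _ = B * δ ^ (s + t) := by rw [hδsplit, hBdef]; ring
        _ ≤ B * δ ^ ζ := mul_le_mul_of_nonneg_left hδζ hB0.le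
    calc riesz t ν x ≤ (∫⁻ y, ENNReal.ofReal (dP x' y) ^ t ∂ν)
          + ((∫⁻ y, N.indicator (fun y => ENNReal.ofReal (dP x y) ^ t) y ∂ν)
          + (∫⁻ y, Nᶜ.indicator (fun y => ENNReal.ofReal ((-t) * δ)
              * ENNReal.ofReal (dP x y) ^ (t-1)) y ∂ν)) := by
          rw [← add_assoc]; exact hint
      _ ≤ riesz t ν x' + ENNReal.ofReal (B * δ ^ ζ) := by
          refine add_le_add (le_of_eq rfl) ?_
          exact le_trans (add_le_add e2 e3) hcomb
  -- conclude
  refine ⟨B, ?_⟩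
  intro x x'
  rcases (s17_dP_nonneg x x').eq_or_lt with h0 | hpos
  · have hxx : x = x' := s17_dP_eq_zero h0.symm
    rw [hxx]
    simp [s17_dP_self, Real.zero_rpow hζ1.ne']
  · have h1 := key x x' hpos
    have h2 := key x' x (by rwa [s17_dP_comm x' x])
    rw [s17_dP_comm x' x] at h2
    have hBδ : 0 ≤ B * dP x x' ^ ζ :=
      mul_nonneg hB0.le (Real.rpow_nonneg (s17_dP_nonneg x x') ζ)
    have h1' : (riesz t ν x).toReal ≤ (riesz t ν x').toReal + B * dP x x' ^ ζ := by
      have h3 := ENNReal.toReal_mono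
        (ENNReal.add_ne_top.2 ⟨hfin' x', ENNReal.ofReal_ne_top⟩) h1
      rwa [ENNReal.toReal_add (hfin' x') ENNReal.ofReal_ne_top,
        ENNReal.toReal_ofReal hBδ] at h3
    have h2' : (riesz t ν x').toReal ≤ (riesz t ν x).toReal + B * dP x x' ^ ζ := by
      have h3 := ENNReal.toReal_mono
        (ENNReal.add_ne_top.2 ⟨hfin' x, ENNReal.ofReal_ne_top⟩) h2
      rwa [ENNReal.toReal_add (hfin' x) ENNReal.ofReal_ne_top,
        ENNReal.toReal_ofReal hBδ] at h3
    rw [abs_sub_le_iff]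
    exact ⟨by linarith, by linarith⟩
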